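/- Let n > 1 be odd. In S_{2n}, set A_i = (2i-1, 2i) for 1 ≤ i ≤ n, π = A_1⋯A_n = (1 2)(3 4)⋯(2n-1 2n), and B_j = (2j-1, 2j+1)(2j, 2j+2) for 1 ≤ j ≤ n-1, so that the centralizer of π in S_{2n} is generated by A_1,…,A_n, B_1,…,B_{n-1}. Let μ ∈ {1, -1} and let ρ be a group homomorphism from the centralizer of π to ℂˣ satisfying ρ(A_i) = -1 for all 1 ≤ i ≤ n and ρ(B_j) = μ for all 1 ≤ j ≤ n-1. Then for all elements t, t' in the conjugacy class of π with t t' = t' t, and all g, g' ∈ S_{2n} with g π g⁻¹ = t and g' π g'⁻¹ = t', the elements g'⁻¹ t g' and g⁻¹ t' g lie in the centralizer of π, ρ(g⁻¹ t g) = -1, and ρ(g'⁻¹ t g') · ρ(g⁻¹ t' g) = 1. (In the paper's terminology: the braided vector space associated to χ_{(n)} ⊗ ε and to χ_{(n)} ⊗ sgn is negative.) -/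

import Mathlib

open Equiv Finset
set_option linter.unusedSectionVars false
namespace Stmt4
variable {n : ℕ}

def bl (x : Fin (2 * n)) : Fin n := ⟨(x : ℕ) / 2, by have := x.isLt; omega⟩
def emb (i : Fin n) : Fin (2 * n) := ⟨2 * (i : ℕ), by have := i.isLt; omega⟩
@[simp] lemma bl_val (x : Fin (2 * n)) : (bl x : ℕ) = (x : ℕ) / 2 := rfl
@[simp] lemma emb_val (i : Fin n) : (emb i : ℕ) = 2 * (i : ℕ) := rfl

lemma cast_even {a : ℕ} (h : a % 2 = 0) : (a : ZMod 2) = 0 := by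
  rw [← ZMod.natCast_mod, h]; rfl
lemma cast_odd {a : ℕ} (h : a % 2 = 1) : (a : ZMod 2) = 1 := by
  rw [← ZMod.natCast_mod, h]; rfl

/-- the induced map on blocks -/
def f (c : Perm (Fin (2 * n))) : Fin n → Fin n := fun i => bl (c (emb i))

lemma f_val (c : Perm (Fin (2 * n))) (i : Fin n) : (f c i : ℕ) = (c (emb i) : ℕ) / 2 := rfl

variable {π : Equiv.Perm (Fin (2 * n))}

section pi
variable (hπ : ∀ x : Fin (2 * n), ((π x : ℕ)) = 2 * ((x : ℕ) / 2) + ((x : ℕ) % 2 + 1) % 2)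
include hπ

lemma pi_pi (x : Fin (2 * n)) : π (π x) = x := by
  have h1 := hπ x; have h2 := hπ (π x)
  apply Fin.ext; omega

lemma pi_sq : π * π = 1 := Equiv.ext fun x => pi_pi hπ x

lemma pi_ne (x : Fin (2 * n)) : π x ≠ x := by
  intro h; have h1 := hπ x; rw [h] at h1; omega

lemma bl_pi (x : Fin (2 * n)) : bl (π x) = bl x := by
  have h1 := hπ x; apply Fin.ext; simp only [bl_val]; omega

omit hπ in
lemma comm_apply {c : Perm (Fin (2 * n))} (hc : c * π = π * c) (x : Fin (2 * n)) :
    c (π x) = π (c x) := by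
  rw [← Perm.mul_apply, ← Perm.mul_apply, hc]

/-- the partner decomposition: every x is either emb (bl x) or π of it -/
lemma emb_bl_or (x : Fin (2 * n)) : emb (bl x) = x ∨ emb (bl x) = π x := by
  rcases Nat.mod_two_eq_zero_or_one (x : ℕ) with h | h
  · left; apply Fin.ext; simp only [emb_val, bl_val]; omega
  · right; apply Fin.ext; have h1 := hπ x; simp only [emb_val, bl_val]; omega

lemma f_bl {c : Perm (Fin (2 * n))} (hc : c * π = π * c) (x : Fin (2 * n)) :
    f c (bl x) = bl (c x) := by
  rcases emb_bl_or hπ x with h | h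
  · rw [f, h]
  · rw [f, h, comm_apply hc, bl_pi hπ]

lemma f_mul {c d : Perm (Fin (2 * n))} (hc : c * π = π * c) (i : Fin n) :
    f (c * d) i = f c (f d i) := by
  show bl ((c * d) (emb i)) = f c (bl (d (emb i)))
  rw [Perm.mul_apply, f_bl hπ hc]

omit hπ in
lemma f_one (i : Fin n) : f (1 : Perm (Fin (2 * n))) i = i := by
  apply Fin.ext; simp only [f, bl_val, Perm.one_apply, emb_val]; omega

omit hπ in
lemma inv_comm {c : Perm (Fin (2 * n))} (hc : c * π = π * c) : c⁻¹ * π = π * c⁻¹ := by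
  have : c⁻¹ * (c * π) * c⁻¹ = c⁻¹ * (π * c) * c⁻¹ := by rw [hc]
  group at this; group; exact this.symm

/-- the induced block permutation -/
def fperm {c : Perm (Fin (2 * n))} (hc : c * π = π * c) : Perm (Fin n) where
  toFun := f c
  invFun := f c⁻¹
  left_inv := fun i => by
    rw [← f_mul hπ (inv_comm hc), inv_mul_cancel, f_one]
  right_inv := fun i => by
    rw [← f_mul hπ hc, mul_inv_cancel, f_one]

@[simp] lemma fperm_apply {c : Perm (Fin (2 * n))} (hc : c * π = π * c) (i : Fin n) :
    fperm hπ hc i = f c i := rfl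

lemma fperm_invol {c : Perm (Fin (2 * n))} (hc : c * π = π * c) (hinv : c * c = 1) :
    fperm hπ hc * fperm hπ hc = 1 := by
  apply Equiv.ext; intro i
  show f c (f c i) = i
  rw [← f_mul hπ hc, hinv, f_one]


omit hπ in
/-- parity flip indicator of block i -/
def ev (c : Perm (Fin (2 * n))) (i : Fin n) : ZMod 2 := ((c (emb i) : ℕ) : ZMod 2)

omit hπ in
def Esum (c : Perm (Fin (2 * n))) : ZMod 2 := ∑ i, ev c i


lemma ev_mul {c : Perm (Fin (2 * n))} (hc : c * π = π * c) (d : Perm (Fin (2 * n)))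
    (i : Fin n) : ev (c * d) i = ev c (f d i) + ev d i := by
  set y := d (emb i) with hy
  have hcd : (c * d) (emb i) = c y := rfl
  have hf : f d i = bl y := rfl
  have key : (((c * d) (emb i) : ℕ)) % 2 = (((c (emb (bl y))) : ℕ) + (y : ℕ)) % 2 := by
    rw [hcd]
    rcases emb_bl_or hπ y with h | h
    · have hv := congrArg Fin.val h
      simp only [emb_val, bl_val] at hv
      rw [h]; omega
    · have hv := congrArg Fin.val h
      simp only [emb_val, bl_val] at hv
      have h1 := hπ (c y); have h2 := hπ y
      rw [h, comm_apply hc]; omega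
  rw [ev, ev, ev, hf, ← ZMod.natCast_mod (((c * d) (emb i)) : ℕ) 2, key,
    ZMod.natCast_mod, Nat.cast_add, ← hy]

lemma Esum_mul {c d : Perm (Fin (2 * n))} (hc : c * π = π * c) (hd : d * π = π * d) :
    Esum (c * d) = Esum c + Esum d := by
  have h : Esum (c * d) = (∑ i, ev c (f d i)) + ∑ i, ev d i := by
    rw [Esum, ← Finset.sum_add_distrib]
    exact Finset.sum_congr rfl fun i _ => ev_mul hπ hc d i
  rw [h, Esum, Esum]
  congr 1
  exact Equiv.sum_comp (fperm hπ hd) (ev c)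

omit hπ in
lemma Esum_one : Esum (1 : Perm (Fin (2 * n))) = 0 := by
  rw [Esum]
  apply Finset.sum_eq_zero
  intro i _
  exact cast_even (by simp only [Perm.one_apply, emb_val]; omega)

/-- E of a fixed-point-free commuting involution is (n : ZMod 2) -/
lemma Esum_invol {c : Perm (Fin (2 * n))} (hc : c * π = π * c) (hinv : c * c = 1)
    (hfix : ∀ x, c x ≠ x) : Esum c = (n : ZMod 2) := by
  have hz : ∀ z : ZMod 2, z + z = 0 := by decide
  have hcc : ∀ x, c (c x) = x := fun x => by
    have := Equiv.ext_iff.mp hinv x; simpa using this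
  have sf1 : ∀ i : Fin n, f c i = i → ev c i = 1 := by
    intro i hfi
    have h1 : ((c (emb i) : ℕ)) / 2 = (i : ℕ) := congrArg Fin.val hfi
    have h2 : ((c (emb i) : ℕ)) ≠ 2 * (i : ℕ) := by
      intro h; exact hfix (emb i) (Fin.ext (by simpa using h))
    exact cast_odd (by omega)
  have sf2 : ∀ i : Fin n, ev c (f c i) = ev c i := by
    intro i
    set y := c (emb i) with hy
    have hcy : c y = emb i := hcc (emb i)
    have key : ((c (emb (bl y)) : ℕ)) % 2 = (y : ℕ) % 2 := by
      rcases emb_bl_or hπ y with h | h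
      · have hv := congrArg Fin.val h
        simp only [emb_val, bl_val] at hv
        rw [h, hcy]; simp only [emb_val]; omega
      · have hv := congrArg Fin.val h
        simp only [emb_val, bl_val] at hv
        have h1 := hπ y
        have h2 := hπ (emb i)
        simp only [emb_val] at h2
        rw [h, comm_apply hc, hcy]; omega
    have hf : f c i = bl y := rfl
    rw [ev, ev, hf, ← ZMod.natCast_mod ((c (emb (bl y)) : ℕ)) 2, key, ZMod.natCast_mod]
  have hsum : ∑ i : Fin n, (ev c i + 1) = 0 := by
    apply Finset.sum_ninvolution (f c)
    · intro a
      rw [sf2 a]; exact hz _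
    · intro a ha hfa
      apply ha
      rw [sf1 a hfa]; exact hz 1
    · intro a; exact Finset.mem_univ _
    · intro a
      have h : f c (f c a) = f (c * c) a := (f_mul hπ hc a).symm
      rw [h, hinv, f_one]
  have h1 : Esum c + (n : ZMod 2) = 0 := by
    rw [Esum, ← hsum, Finset.sum_add_distrib]
    congr 1
    rw [Finset.sum_const, Finset.card_univ, Fintype.card_fin, nsmul_eq_mul, mul_one]
  calc Esum c = Esum c + ((n : ZMod 2) + (n : ZMod 2)) := by rw [hz, add_zero]
    _ = (Esum c + (n : ZMod 2)) + (n : ZMod 2) := by ring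
    _ = (n : ZMod 2) := by rw [h1, zero_add]


omit hπ in
lemma sign_invol {m : ℕ} {p q : Perm (Fin m)} (hp : p * p = 1) (hq : q * q = 1)
    (h : p.support.card = q.support.card) : Perm.sign p = Perm.sign q := by
  have key : ∀ r : Perm (Fin m), r * r = 1 → ∀ a ∈ r.cycleType, a = 2 := by
    intro r hr a ha
    have h2 : 2 ≤ a := Equiv.Perm.two_le_of_mem_cycleType ha
    have hdvd : a ∣ 2 := by
      have h3 : a ∣ orderOf r := by
        rw [← Equiv.Perm.lcm_cycleType]; exact Multiset.dvd_lcm ha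
      exact h3.trans (orderOf_dvd_of_pow_eq_one (by rw [pow_two]; exact hr))
    have := Nat.le_of_dvd (by norm_num) hdvd
    omega
  have hkp : p.cycleType = Multiset.replicate (Multiset.card p.cycleType) 2 :=
    Multiset.eq_replicate_card.mpr (key p hp)
  have hkq : q.cycleType = Multiset.replicate (Multiset.card q.cycleType) 2 :=
    Multiset.eq_replicate_card.mpr (key q hq)
  have e1 : p.support.card = Multiset.card p.cycleType * 2 := by
    conv_lhs => rw [← Equiv.Perm.sum_cycleType, hkp]
    rw [Multiset.sum_replicate, smul_eq_mul]
  have e2 : q.support.card = Multiset.card q.cycleType * 2 := by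
    conv_lhs => rw [← Equiv.Perm.sum_cycleType, hkq]
    rw [Multiset.sum_replicate, smul_eq_mul]
  have hcards : Multiset.card p.cycleType = Multiset.card q.cycleType := by omega
  rw [Equiv.Perm.sign_of_cycleType, Equiv.Perm.sign_of_cycleType,
    Equiv.Perm.sum_cycleType, Equiv.Perm.sum_cycleType, h, hcards]

omit hπ in
/-- The pairing equivalence Fin n × Fin 2 ≃ Fin (2n). -/
def pairEquiv : Fin n × Fin 2 ≃ Fin (2 * n) where
  toFun p := ⟨2 * (p.1 : ℕ) + (p.2 : ℕ), by have := p.1.isLt; have := p.2.isLt; omega⟩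
  invFun x := (bl x, ⟨(x : ℕ) % 2, by omega⟩)
  left_inv p := by
    have h1 := p.1.isLt; have h2 := p.2.isLt
    apply Prod.ext
    · apply Fin.ext; simp only [bl_val]; omega
    · apply Fin.ext; simp only []; omega
  right_inv x := by
    apply Fin.ext; simp only [bl_val]; omega

omit hπ in
lemma bl_pairEquiv (p : Fin n × Fin 2) : bl (pairEquiv p) = p.1 := by
  have h2 := p.2.isLt
  apply Fin.ext; simp only [bl_val, pairEquiv, coe_fn_mk]; omega

omit hπ in
lemma card_filter_bl (Q : Fin n → Prop) [DecidablePred Q] :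
    (Finset.univ.filter fun x : Fin (2 * n) => Q (bl x)).card
      = 2 * (Finset.univ.filter Q).card := by
  rw [Finset.card_filter, Finset.card_filter]
  rw [← Equiv.sum_comp pairEquiv (fun x => if Q (bl x) then 1 else 0)]
  rw [Fintype.sum_prod_type, Finset.mul_sum]
  refine Finset.sum_congr rfl fun i _ => ?_
  simp only [bl_pairEquiv]
  rw [Finset.sum_const, Finset.card_univ, Fintype.card_fin, smul_eq_mul]

lemma supp_card {c : Perm (Fin (2 * n))} (hc : c * π = π * c) (hinv : c * c = 1)
    (hfix : ∀ x, c x ≠ x) :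
    (c * π).support.card = 2 * (fperm hπ hc).support.card := by
  have hcc : ∀ x, c (c x) = x := fun x => by
    have := Equiv.ext_iff.mp hinv x; simpa using this
  have hswap : ∀ i : Fin n, f c i = i → c (emb i) = π (emb i) := by
    intro i hfi
    have h1 : ((c (emb i) : ℕ)) / 2 = (i : ℕ) := congrArg Fin.val hfi
    have h2 : ((c (emb i) : ℕ)) ≠ 2 * (i : ℕ) := by
      intro hx; exact hfix (emb i) (Fin.ext (by simpa using hx))
    have h3 := hπ (emb i)
    simp only [emb_val] at h3
    apply Fin.ext; omega
  have hpt : ∀ x, (c * π) x ≠ x ↔ f c (bl x) ≠ bl x := by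
    intro x
    constructor
    · intro hne
      by_contra hfe
      apply hne
      have hce := hswap (bl x) hfe
      rcases emb_bl_or hπ x with h | h
      · rw [Perm.mul_apply, ← h, ← hce, hcc, h]
      · have hx : x = π (emb (bl x)) := by rw [h, pi_pi hπ]
        rw [Perm.mul_apply]
        conv_lhs => rw [hx, pi_pi hπ, hce]
        exact hx.symm
    · intro hne hxe
      apply hne
      have h4 : bl ((c * π) x) = bl x := by rw [hxe]
      rw [Perm.mul_apply, comm_apply hc, bl_pi hπ] at h4
      rw [f_bl hπ hc]
      exact h4
  have h1 : (c * π).support = Finset.univ.filter fun x => f c (bl x) ≠ bl x := by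
    ext x; simp only [Perm.mem_support, Finset.mem_filter, Finset.mem_univ, true_and, hpt x]
  have h2 : (fperm hπ hc).support = Finset.univ.filter fun i => f c i ≠ i := by
    ext i; simp only [Perm.mem_support, Finset.mem_filter, Finset.mem_univ, true_and,
      fperm_apply]
  rw [h1, h2]
  exact card_filter_bl (fun i => f c i ≠ i)


end pi

noncomputable def m1 : ZMod 2 → ℂˣ := fun a => if a = 0 then 1 else -1

lemma m1_zero : m1 0 = 1 := if_pos rfl
lemma m1_one : m1 1 = -1 := if_neg (by decide)

lemma m1_add (a b : ZMod 2) : m1 (a + b) = m1 a * m1 b := by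
  have h : ∀ z : ZMod 2, z = 0 ∨ z = 1 := by decide
  rcases h a with ha | ha <;> rcases h b with hb | hb <;> subst ha <;> subst hb
  · rw [add_zero, m1_zero, one_mul]
  · rw [zero_add, m1_zero, one_mul]
  · rw [add_zero, m1_zero, mul_one]
  · rw [show (1 : ZMod 2) + 1 = 0 from by decide, m1_zero, m1_one]
    rw [neg_mul_neg, one_mul]

noncomputable def m2 (μ : ℂˣ) : ℤˣ → ℂˣ := fun s => if s = 1 then 1 else μ

lemma m2_one (μ : ℂˣ) : m2 μ 1 = 1 := if_pos rfl
lemma m2_neg_one (μ : ℂˣ) : m2 μ (-1) = μ := if_neg (by decide)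

lemma m2_mul {μ : ℂˣ} (hμ2 : μ * μ = 1) (s t : ℤˣ) : m2 μ (s * t) = m2 μ s * m2 μ t := by
  rcases Int.units_eq_one_or s with hs | hs <;> rcases Int.units_eq_one_or t with ht | ht <;>
    subst hs <;> subst ht
  · rw [mul_one, m2_one, one_mul]
  · rw [one_mul, m2_one, one_mul]
  · rw [mul_one, m2_one, mul_one]
  · rw [show (-1 : ℤˣ) * -1 = 1 from by decide, m2_one, m2_neg_one, hμ2]


section rho
variable {π : Equiv.Perm (Fin (2 * n))}
  (hπ : ∀ x : Fin (2 * n), ((π x : ℕ)) = 2 * ((x : ℕ) / 2) + ((x : ℕ) % 2 + 1) % 2)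
  (μ : ℂˣ)

lemma mem_comm {c : Perm (Fin (2 * n))}
    (h : c ∈ Subgroup.centralizer ({π} : Set (Perm (Fin (2 * n))))) : c * π = π * c :=
  Subgroup.mem_centralizer_singleton_iff.mp h

/-- the explicit character of the centralizer -/
noncomputable def rho' (c : Subgroup.centralizer ({π} : Set (Perm (Fin (2 * n))))) : ℂˣ :=
  m1 (Esum c.val) * m2 μ (Perm.sign (fperm hπ (mem_comm c.2)))

include hπ

lemma fperm_mul {c d : Perm (Fin (2 * n))} (hc : c * π = π * c) (hd : d * π = π * d)
    (hcd : (c * d) * π = π * (c * d)) :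
    fperm hπ hcd = fperm hπ hc * fperm hπ hd :=
  Equiv.ext fun i => f_mul hπ hc i

lemma fperm_one (h : (1 : Perm (Fin (2 * n))) * π = π * 1) : fperm hπ h = 1 :=
  Equiv.ext fun i => f_one i

lemma rho'_mul (hμ2 : μ * μ = 1)
    (c d : Subgroup.centralizer ({π} : Set (Perm (Fin (2 * n))))) :
    rho' hπ μ (c * d) = rho' hπ μ c * rho' hπ μ d := by
  have hc := mem_comm c.2
  have hd := mem_comm d.2
  show m1 (Esum (c.val * d.val)) * m2 μ (Perm.sign (fperm hπ (mem_comm (c * d).2)))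
    = _
  rw [Esum_mul hπ hc hd, fperm_mul hπ hc hd (mem_comm (c * d).2), map_mul, m1_add,
    m2_mul hμ2, mul_mul_mul_comm]
  rfl

lemma rho'_one : rho' hπ μ 1 = 1 := by
  show m1 (Esum 1) * m2 μ (Perm.sign (fperm hπ (mem_comm (1 : Subgroup.centralizer _).2))) = 1
  rw [Esum_one, m1_zero, fperm_one hπ, map_one, m2_one, mul_one]

lemma rho'_inv (hμ2 : μ * μ = 1)
    (c : Subgroup.centralizer ({π} : Set (Perm (Fin (2 * n))))) :
    rho' hπ μ c⁻¹ = (rho' hπ μ c)⁻¹ := by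
  apply eq_inv_of_mul_eq_one_left
  rw [← rho'_mul hπ μ hμ2, inv_mul_cancel, rho'_one hπ]

lemma fperm_A {a : Perm (Fin (2 * n))} {i : ℕ} (hi : i < n)
    (ha : ∀ x : Fin (2 * n),
      ((a x : ℕ)) = if (x : ℕ) / 2 = i then 2 * i + ((x : ℕ) % 2 + 1) % 2 else (x : ℕ))
    (hc : a * π = π * a) : fperm hπ hc = 1 := by
  apply Equiv.ext; intro j; apply Fin.ext
  show (a (emb j) : ℕ) / 2 = (j : ℕ)
  have h2 := ha (emb j); rw [emb_val] at h2
  split_ifs at h2 <;> omega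

omit hπ in
lemma Esum_A {a : Perm (Fin (2 * n))} {i : ℕ} (hi : i < n)
    (ha : ∀ x : Fin (2 * n),
      ((a x : ℕ)) = if (x : ℕ) / 2 = i then 2 * i + ((x : ℕ) % 2 + 1) % 2 else (x : ℕ)) :
    Esum a = 1 := by
  have hev : ∀ k : Fin n, ev a k = if k = (⟨i, hi⟩ : Fin n) then 1 else 0 := by
    intro k
    have h2 := ha (emb k); rw [emb_val] at h2
    by_cases hk : k = (⟨i, hi⟩ : Fin n)
    · rw [if_pos hk]
      have hkv : (k : ℕ) = i := congrArg Fin.val hk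
      apply cast_odd; split_ifs at h2 <;> omega
    · rw [if_neg hk]
      have hkv : (k : ℕ) ≠ i := fun h => hk (Fin.ext h)
      apply cast_even; split_ifs at h2 <;> omega
  rw [Esum, Finset.sum_congr rfl fun k _ => hev k, Finset.sum_ite_eq' Finset.univ]
  simp

lemma fperm_B {b : Perm (Fin (2 * n))} {j : ℕ} (hj : j + 1 < n)
    (hb : ∀ x : Fin (2 * n),
      ((b x : ℕ)) = if (x : ℕ) / 2 = j then (x : ℕ) + 2
        else if (x : ℕ) / 2 = j + 1 then (x : ℕ) - 2 else (x : ℕ))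
    (hc : b * π = π * b) :
    fperm hπ hc = Equiv.swap (⟨j, by omega⟩ : Fin n) ⟨j + 1, by omega⟩ := by
  apply Equiv.ext; intro k
  by_cases hk1 : k = (⟨j, by omega⟩ : Fin n)
  · rw [hk1, Equiv.swap_apply_left]
    apply Fin.ext
    show (b (emb ⟨j, by omega⟩) : ℕ) / 2 = j + 1
    have h2 := hb (emb ⟨j, by omega⟩); rw [emb_val] at h2
    have hv1 : ((⟨j, by omega⟩ : Fin n) : ℕ) = j := rfl
    have hv2 : ((⟨j + 1, by omega⟩ : Fin n) : ℕ) = j + 1 := rfl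
    split_ifs at h2 <;> omega
  · by_cases hk2 : k = (⟨j + 1, by omega⟩ : Fin n)
    · rw [hk2, Equiv.swap_apply_right]
      apply Fin.ext
      show (b (emb ⟨j + 1, by omega⟩) : ℕ) / 2 = j
      have h2 := hb (emb ⟨j + 1, by omega⟩); rw [emb_val] at h2
      have hv1 : ((⟨j, by omega⟩ : Fin n) : ℕ) = j := rfl
      have hv2 : ((⟨j + 1, by omega⟩ : Fin n) : ℕ) = j + 1 := rfl
      split_ifs at h2 <;> omega
    · rw [Equiv.swap_apply_of_ne_of_ne hk1 hk2]
      apply Fin.ext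
      show (b (emb k) : ℕ) / 2 = (k : ℕ)
      have hkv1 : (k : ℕ) ≠ j := fun h => hk1 (Fin.ext h)
      have hkv2 : (k : ℕ) ≠ j + 1 := fun h => hk2 (Fin.ext h)
      have h2 := hb (emb k); rw [emb_val] at h2
      split_ifs at h2 <;> omega

omit hπ in
lemma Esum_B {b : Perm (Fin (2 * n))} {j : ℕ} (hj : j + 1 < n)
    (hb : ∀ x : Fin (2 * n),
      ((b x : ℕ)) = if (x : ℕ) / 2 = j then (x : ℕ) + 2
        else if (x : ℕ) / 2 = j + 1 then (x : ℕ) - 2 else (x : ℕ)) :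
    Esum b = 0 := by
  rw [Esum]
  apply Finset.sum_eq_zero
  intro k _
  have h2 := hb (emb k); rw [emb_val] at h2
  apply cast_even; split_ifs at h2 <;> omega

lemma rho'_A {a : Perm (Fin (2 * n))} {i : ℕ} (hi : i < n)
    (ha : ∀ x : Fin (2 * n),
      ((a x : ℕ)) = if (x : ℕ) / 2 = i then 2 * i + ((x : ℕ) % 2 + 1) % 2 else (x : ℕ))
    (h : a ∈ Subgroup.centralizer ({π} : Set (Perm (Fin (2 * n))))) :
    rho' hπ μ ⟨a, h⟩ = -1 := by
  show m1 (Esum a) * m2 μ (Perm.sign (fperm hπ (mem_comm h))) = -1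
  rw [Esum_A hi ha, m1_one, fperm_A hπ hi ha, map_one, m2_one, mul_one]

lemma rho'_B {b : Perm (Fin (2 * n))} {j : ℕ} (hj : j + 1 < n)
    (hb : ∀ x : Fin (2 * n),
      ((b x : ℕ)) = if (x : ℕ) / 2 = j then (x : ℕ) + 2
        else if (x : ℕ) / 2 = j + 1 then (x : ℕ) - 2 else (x : ℕ))
    (h : b ∈ Subgroup.centralizer ({π} : Set (Perm (Fin (2 * n))))) :
    rho' hπ μ ⟨b, h⟩ = μ := by
  show m1 (Esum b) * m2 μ (Perm.sign (fperm hπ (mem_comm h))) = μ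
  rw [Esum_B hj hb, m1_zero, fperm_B hπ hj hb, Equiv.Perm.sign_swap
    (Fin.ne_of_val_ne (by simp)), m2_neg_one, one_mul]

lemma fperm_pi (hc : π * π = π * π) : fperm hπ hc = 1 := by
  apply Equiv.ext; intro i
  show bl (π (emb i)) = i
  rw [bl_pi hπ]
  exact f_one i

lemma rho'_pi (hodd : n % 2 = 1)
    (h : π ∈ Subgroup.centralizer ({π} : Set (Perm (Fin (2 * n))))) :
    rho' hπ μ ⟨π, h⟩ = -1 := by
  show m1 (Esum π) * m2 μ (Perm.sign (fperm hπ (mem_comm h))) = -1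
  rw [Esum_invol hπ rfl (pi_sq hπ) (pi_ne hπ), cast_odd hodd, m1_one,
    fperm_pi hπ, map_one, m2_one, mul_one]

lemma rho_eq
    (A : ℕ → Equiv.Perm (Fin (2 * n)))
    (hA : ∀ i < n, ∀ x : Fin (2 * n),
      ((A i x : ℕ)) = if (x : ℕ) / 2 = i then 2 * i + ((x : ℕ) % 2 + 1) % 2 else (x : ℕ))
    (B : ℕ → Equiv.Perm (Fin (2 * n)))
    (hB : ∀ j, j + 1 < n → ∀ x : Fin (2 * n),
      ((B j x : ℕ)) = if (x : ℕ) / 2 = j then (x : ℕ) + 2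
        else if (x : ℕ) / 2 = j + 1 then (x : ℕ) - 2 else (x : ℕ))
    (hgen : Subgroup.centralizer {π} =
      Subgroup.closure (A '' {i | i < n} ∪ B '' {j | j + 1 < n}))
    (hμ2 : μ * μ = 1)
    (ρ : ↥(Subgroup.centralizer ({π} : Set (Perm (Fin (2 * n))))) →* ℂˣ)
    (hρA : ∀ i (_ : i < n) (h : A i ∈ Subgroup.centralizer {π}), ρ ⟨A i, h⟩ = -1)
    (hρB : ∀ j (_ : j + 1 < n) (h : B j ∈ Subgroup.centralizer {π}), ρ ⟨B j, h⟩ = μ)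
    (c : ↥(Subgroup.centralizer ({π} : Set (Perm (Fin (2 * n)))))) :
    ρ c = rho' hπ μ c := by
  obtain ⟨cv, hcv⟩ := c
  have hcv' : cv ∈ Subgroup.closure (A '' {i | i < n} ∪ B '' {j | j + 1 < n}) :=
    hgen ▸ hcv
  refine Subgroup.closure_induction
    (p := fun x _ => ∀ hx : x ∈ Subgroup.centralizer ({π} : Set (Perm (Fin (2 * n)))),
      ρ ⟨x, hx⟩ = rho' hπ μ ⟨x, hx⟩) ?_ ?_ ?_ ?_ hcv' hcv
  · intro x hxS hx
    rcases hxS with ⟨i, hi, rfl⟩ | ⟨j, hj, rfl⟩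
    · exact (hρA i hi hx).trans (rho'_A hπ μ hi (hA i hi) hx).symm
    · exact (hρB j hj hx).trans (rho'_B hπ μ hj (hB j hj) hx).symm
  · intro hx
    have h1 : (⟨1, hx⟩ : Subgroup.centralizer ({π} : Set (Perm (Fin (2 * n))))) = 1 := rfl
    rw [h1, map_one, rho'_one hπ]
  · intro x y hxcl hycl ihx ihy hxy
    have hxC : x ∈ Subgroup.centralizer ({π} : Set (Perm (Fin (2 * n)))) := by
      rw [hgen]; exact hxcl
    have hyC : y ∈ Subgroup.centralizer ({π} : Set (Perm (Fin (2 * n)))) := by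
      rw [hgen]; exact hycl
    have h1 : (⟨x * y, hxy⟩ : Subgroup.centralizer ({π} : Set (Perm (Fin (2 * n)))))
        = ⟨x, hxC⟩ * ⟨y, hyC⟩ := rfl
    rw [h1, map_mul, rho'_mul hπ μ hμ2, ihx hxC, ihy hyC]
  · intro x hxcl ih hxi
    have hxC : x ∈ Subgroup.centralizer ({π} : Set (Perm (Fin (2 * n)))) := by
      rw [hgen]; exact hxcl
    have h1 : (⟨x⁻¹, hxi⟩ : Subgroup.centralizer ({π} : Set (Perm (Fin (2 * n)))))
        = (⟨x, hxC⟩)⁻¹ := rfl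
    rw [h1, map_inv, rho'_inv hπ μ hμ2, ih hxC]

end rho
end Stmt4

open Stmt4

/-- Let `n > 1` be odd.  In `S_{2n}` (on `Fin (2*n)`, `0`-indexed),
set `A i = (2i, 2i+1)` for `0 ≤ i < n`, `π = A_0 ⋯ A_{n-1}`, and
`B j = (2j, 2j+2)(2j+1, 2j+3)` for `0 ≤ j < n-1`, so that the centralizer of `π` in
`S_{2n}` is generated by the `A i`'s and `B j`'s.  Let `μ ∈ {1,-1}` and let `ρ` be a
homomorphism from the centralizer of `π` to `ℂˣ` with `ρ(A i) = -1` and `ρ(B j) = μ`.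
Then for all commuting `t, t'` in the conjugacy class of `π` and all `g, g'` with
`g π g⁻¹ = t`, `g' π g'⁻¹ = t'`, the elements `g'⁻¹ t g'` and `g⁻¹ t' g` lie in
the centralizer of `π`, `ρ(g⁻¹ t g) = -1` and `ρ(g'⁻¹ t g') · ρ(g⁻¹ t' g) = 1`:
the braided vector space associated to `χ_{(n)} ⊗ ε` or `χ_{(n)} ⊗ sgn` is negative. -/
theorem stmt4 (n : ℕ) (hn : 1 < n) (hodd : Odd n)
    (A : ℕ → Equiv.Perm (Fin (2 * n)))
    (hA : ∀ i < n, ∀ x : Fin (2 * n),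
      ((A i x : ℕ)) = if (x : ℕ) / 2 = i then 2 * i + ((x : ℕ) % 2 + 1) % 2 else (x : ℕ))
    (π : Equiv.Perm (Fin (2 * n)))
    (hπ : ∀ x : Fin (2 * n),
      ((π x : ℕ)) = 2 * ((x : ℕ) / 2) + ((x : ℕ) % 2 + 1) % 2)
    (B : ℕ → Equiv.Perm (Fin (2 * n)))
    (hB : ∀ j, j + 1 < n → ∀ x : Fin (2 * n),
      ((B j x : ℕ)) = if (x : ℕ) / 2 = j then (x : ℕ) + 2
        else if (x : ℕ) / 2 = j + 1 then (x : ℕ) - 2 else (x : ℕ))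
    (hgen : Subgroup.centralizer {π} =
      Subgroup.closure (A '' {i | i < n} ∪ B '' {j | j + 1 < n}))
    (μ : ℂˣ) (hμ : μ = 1 ∨ μ = -1)
    (ρ : ↥(Subgroup.centralizer {π}) →* ℂˣ)
    (hρA : ∀ i (_ : i < n) (h : A i ∈ Subgroup.centralizer {π}), ρ ⟨A i, h⟩ = -1)
    (hρB : ∀ j (_ : j + 1 < n) (h : B j ∈ Subgroup.centralizer {π}), ρ ⟨B j, h⟩ = μ)
    (t t' : Equiv.Perm (Fin (2 * n))) (hcomm : t * t' = t' * t)
    (g g' : Equiv.Perm (Fin (2 * n))) (hg : g * π * g⁻¹ = t) (hg' : g' * π * g'⁻¹ = t') :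
    g'⁻¹ * t * g' ∈ Subgroup.centralizer {π} ∧
    g⁻¹ * t' * g ∈ Subgroup.centralizer {π} ∧
    (∀ h : g⁻¹ * t * g ∈ Subgroup.centralizer {π}, ρ ⟨g⁻¹ * t * g, h⟩ = -1) ∧
    (∀ (h1 : g'⁻¹ * t * g' ∈ Subgroup.centralizer {π})
       (h2 : g⁻¹ * t' * g ∈ Subgroup.centralizer {π}),
      ρ ⟨g'⁻¹ * t * g', h1⟩ * ρ ⟨g⁻¹ * t' * g, h2⟩ = 1) := by
  have hodd2 : n % 2 = 1 := Nat.odd_iff.mp hodd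
  have hμ2 : μ * μ = 1 := by rcases hμ with h | h <;> rw [h] <;> norm_num
  set h0 := g⁻¹ * g' with hh0
  set σv := h0⁻¹ * π * h0 with hσv
  set τv := h0 * π * h0⁻¹ with hτv
  have eq1 : g'⁻¹ * t * g' = σv := by rw [← hg, hσv, hh0]; group
  have eq2 : g⁻¹ * t' * g = τv := by rw [← hg', hτv, hh0]; group
  have eq3 : g⁻¹ * t * g = π := by rw [← hg]; group
  have hπt' : π = g'⁻¹ * t' * g' := by rw [← hg']; group
  have hπt : π = g⁻¹ * t * g := eq3.symm
  have conjprod : ∀ w u v : Equiv.Perm (Fin (2 * n)),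
      (w⁻¹ * u * w) * (w⁻¹ * v * w) = w⁻¹ * (u * v) * w := by intro w u v; group
  have commσ : σv * π = π * σv := by
    rw [← eq1, hπt', conjprod, conjprod, hcomm]
  have commτ : τv * π = π * τv := by
    rw [← eq2, hπt, conjprod, conjprod, hcomm]
  have memσ : σv ∈ Subgroup.centralizer ({π} : Set (Equiv.Perm (Fin (2 * n)))) :=
    Subgroup.mem_centralizer_singleton_iff.mpr commσ
  have memτ : τv ∈ Subgroup.centralizer ({π} : Set (Equiv.Perm (Fin (2 * n)))) :=
    Subgroup.mem_centralizer_singleton_iff.mpr commτ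
  have memπ : π ∈ Subgroup.centralizer ({π} : Set (Equiv.Perm (Fin (2 * n)))) :=
    Subgroup.mem_centralizer_singleton_iff.mpr rfl
  have hπsq : π * π = 1 := pi_sq hπ
  have hσinv : σv * σv = 1 := by
    have h : σv * σv = h0⁻¹ * (π * π) * h0 := by rw [hσv]; group
    rw [h, hπsq, mul_one, inv_mul_cancel]
  have hτinv : τv * τv = 1 := by
    have h : τv * τv = h0 * (π * π) * h0⁻¹ := by rw [hτv]; group
    rw [h, hπsq, mul_one, mul_inv_cancel]
  have hσfix : ∀ x, σv x ≠ x := by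
    intro x hfx
    have h1 : σv x = h0⁻¹ (π (h0 x)) := rfl
    rw [h1] at hfx
    have h2 := congrArg h0 hfx
    rw [← Perm.mul_apply, mul_inv_cancel, Perm.one_apply] at h2
    exact pi_ne hπ (h0 x) h2
  have hτfix : ∀ x, τv x ≠ x := by
    intro x hfx
    have h1 : τv x = h0 (π (h0⁻¹ x)) := rfl
    rw [h1] at hfx
    exact pi_ne hπ (h0⁻¹ x)
      (h0.injective (by rw [hfx, ← Perm.mul_apply, mul_inv_cancel, Perm.one_apply]))
  have hrho := rho_eq hπ μ A hA B hB hgen hμ2 ρ hρA hρB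
  refine ⟨eq1 ▸ memσ, eq2 ▸ memτ, ?_, ?_⟩
  · intro h
    have e : (⟨g⁻¹ * t * g, h⟩ : Subgroup.centralizer ({π} : Set (Equiv.Perm (Fin (2 * n)))))
        = ⟨π, memπ⟩ := Subtype.ext eq3
    rw [e, hrho, rho'_pi hπ μ hodd2]
  · intro h1 h2
    have e1 : (⟨g'⁻¹ * t * g', h1⟩ :
        Subgroup.centralizer ({π} : Set (Equiv.Perm (Fin (2 * n))))) = ⟨σv, memσ⟩ :=
      Subtype.ext eq1
    have e2 : (⟨g⁻¹ * t' * g, h2⟩ :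
        Subgroup.centralizer ({π} : Set (Equiv.Perm (Fin (2 * n))))) = ⟨τv, memτ⟩ :=
      Subtype.ext eq2
    rw [e1, e2, hrho, hrho]
    -- signs are equal
    have hs1 : (σv * π).support.card = 2 * (fperm hπ commσ).support.card :=
      supp_card hπ commσ hσinv hσfix
    have hs2 : (τv * π).support.card = 2 * (fperm hπ commτ).support.card :=
      supp_card hπ commτ hτinv hτfix
    have c1 : h0 * (σv * π) * h0⁻¹ = π * τv := by rw [hσv, hτv]; group
    have c2 : τv⁻¹ * (τv * π) * τv⁻¹⁻¹ = π * τv := by group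
    have hs3 : (σv * π).support.card = (τv * π).support.card := by
      calc (σv * π).support.card = (h0 * (σv * π) * h0⁻¹).support.card :=
            (Equiv.Perm.card_support_conj).symm
        _ = (π * τv).support.card := by rw [c1]
        _ = (τv⁻¹ * (τv * π) * τv⁻¹⁻¹).support.card := by rw [c2]
        _ = (τv * π).support.card := Equiv.Perm.card_support_conj
    have hsign : Equiv.Perm.sign (fperm hπ commσ) = Equiv.Perm.sign (fperm hπ commτ) := by
      apply sign_invol (fperm_invol hπ commσ hσinv) (fperm_invol hπ commτ hτinv)
      omega
    -- the E-values are 1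
    have hE1 : Esum σv = 1 := by rw [Esum_invol hπ commσ hσinv hσfix, cast_odd hodd2]
    have hE2 : Esum τv = 1 := by rw [Esum_invol hπ commτ hτinv hτfix, cast_odd hodd2]
    show (m1 (Esum σv) * m2 μ (Equiv.Perm.sign (fperm hπ (mem_comm memσ)))) *
      (m1 (Esum τv) * m2 μ (Equiv.Perm.sign (fperm hπ (mem_comm memτ)))) = 1
    rw [hE1, hE2, m1_one]
    have hpf1 : fperm hπ (mem_comm memσ) = fperm hπ commσ := rfl
    have hpf2 : fperm hπ (mem_comm memτ) = fperm hπ commτ := rfl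
    rw [hpf1, hpf2, ← hsign, mul_mul_mul_comm, neg_mul_neg, one_mul,
      ← m2_mul hμ2]
    have hss : Equiv.Perm.sign (fperm hπ commσ) * Equiv.Perm.sign (fperm hπ commσ) = 1 := by
      rcases Int.units_eq_one_or (Equiv.Perm.sign (fperm hπ commσ)) with hs | hs <;>
        rw [hs] <;> decide
    rw [hss, m2_one]
    exact one_mul 1
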